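/- (Linear large deviation bound for sparse vectors) Let r ≥ 2 be even, 1 ≤ q ≤ √N, and let X₁,…,X_N be independent complex random variables with E X_i = 0 and E|X_i|^k ≤ 1/(N q^{k−2}) for all 2 ≤ k ≤ r. Let a₁,…,a_N ∈ ℂ satisfy ((1/N)∑_i |a_i|²)^{1/2} ≤ γ and (max_i |a_i|)/q ≤ ψ. Then the L^r norm satisfies ‖∑_i a_i X_i‖_r ≤ (max(2r/(1 + 2(log(ψ/γ))₊), 2)) · max(γ, ψ). -/

import Mathlib

open MeasureTheory ProbabilityTheory Finset


section AuxProb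
variable {Ω : Type*} {mΩ : MeasurableSpace Ω} {μ : Measure Ω}



lemma integral_complex_re {h : Ω → ℂ} (hh : Integrable h μ) :
    (∫ ω, h ω ∂μ).re = ∫ ω, (h ω).re ∂μ := by
  rw [← RCLike.re_eq_complex_re, integral_re hh]

lemma integral_complex_im {h : Ω → ℂ} (hh : Integrable h μ) :
    (∫ ω, h ω ∂μ).im = ∫ ω, (h ω).im ∂μ := by
  rw [← RCLike.im_eq_complex_im, integral_im hh]

lemma indepFun_integral_mul_complex {f g : Ω → ℂ} (h : IndepFun f g μ)
    (hf : Integrable f μ) (hg : Integrable g μ) :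
    ∫ ω, f ω * g ω ∂μ = (∫ ω, f ω ∂μ) * ∫ ω, g ω ∂μ := by
  have hfg : Integrable (fun ω => f ω * g ω) μ := h.integrable_mul hf hg
  have hre : IndepFun (fun ω => (f ω).re) (fun ω => (g ω).re) μ :=
    h.comp Complex.measurable_re Complex.measurable_re
  have hri : IndepFun (fun ω => (f ω).re) (fun ω => (g ω).im) μ :=
    h.comp Complex.measurable_re Complex.measurable_im
  have hir : IndepFun (fun ω => (f ω).im) (fun ω => (g ω).re) μ :=
    h.comp Complex.measurable_im Complex.measurable_re
  have hii : IndepFun (fun ω => (f ω).im) (fun ω => (g ω).im) μ :=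
    h.comp Complex.measurable_im Complex.measurable_im
  have ifr : Integrable (fun ω => (f ω).re) μ := hf.re
  have ifi : Integrable (fun ω => (f ω).im) μ := hf.im
  have igr : Integrable (fun ω => (g ω).re) μ := hg.re
  have igi : Integrable (fun ω => (g ω).im) μ := hg.im
  have i1 : Integrable (fun ω => (f ω).re * (g ω).re) μ := hre.integrable_mul ifr igr
  have i2 : Integrable (fun ω => (f ω).im * (g ω).im) μ := hii.integrable_mul ifi igi
  have i3 : Integrable (fun ω => (f ω).re * (g ω).im) μ := hri.integrable_mul ifr igi
  have i4 : Integrable (fun ω => (f ω).im * (g ω).re) μ := hir.integrable_mul ifi igr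
  have e1 : ∫ ω, (f ω).re * (g ω).re ∂μ = (∫ ω, (f ω).re ∂μ) * ∫ ω, (g ω).re ∂μ :=
    IndepFun.integral_fun_mul_eq_mul_integral hre ifr.aestronglyMeasurable igr.aestronglyMeasurable
  have e2 : ∫ ω, (f ω).im * (g ω).im ∂μ = (∫ ω, (f ω).im ∂μ) * ∫ ω, (g ω).im ∂μ :=
    IndepFun.integral_fun_mul_eq_mul_integral hii ifi.aestronglyMeasurable igi.aestronglyMeasurable
  have e3 : ∫ ω, (f ω).re * (g ω).im ∂μ = (∫ ω, (f ω).re ∂μ) * ∫ ω, (g ω).im ∂μ :=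
    IndepFun.integral_fun_mul_eq_mul_integral hri ifr.aestronglyMeasurable igi.aestronglyMeasurable
  have e4 : ∫ ω, (f ω).im * (g ω).re ∂μ = (∫ ω, (f ω).im ∂μ) * ∫ ω, (g ω).re ∂μ :=
    IndepFun.integral_fun_mul_eq_mul_integral hir ifi.aestronglyMeasurable igr.aestronglyMeasurable
  apply Complex.ext
  · rw [integral_complex_re hfg, Complex.mul_re, integral_complex_re hf,
      integral_complex_re hg, integral_complex_im hf, integral_complex_im hg]
    have : (fun ω => (f ω * g ω).re) = fun ω => (f ω).re * (g ω).re - (f ω).im * (g ω).im := by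
      funext ω; simp [Complex.mul_re]
    rw [this, integral_sub i1 i2, e1, e2]
  · rw [integral_complex_im hfg, Complex.mul_im, integral_complex_re hf,
      integral_complex_re hg, integral_complex_im hf, integral_complex_im hg]
    have : (fun ω => (f ω * g ω).im) = fun ω => (f ω).re * (g ω).im + (f ω).im * (g ω).re := by
      funext ω; simp [Complex.mul_im]
    rw [this, integral_add i3 i4, e3, e4]

lemma iIndep_prod_integral {ι : Type*} [IsProbabilityMeasure μ] {Y : ι → Ω → ℂ}
    (h : iIndepFun Y μ) (hm : ∀ i, Measurable (Y i))
    (hi : ∀ i, Integrable (Y i) μ) (s : Finset ι) :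
    Integrable (fun ω => ∏ i ∈ s, Y i ω) μ ∧
      ∫ ω, ∏ i ∈ s, Y i ω ∂μ = ∏ i ∈ s, ∫ ω, Y i ω ∂μ := by
  classical
  induction s using Finset.induction_on with
  | empty => simp [integrable_const]
  | insert j s hns ih =>
    have hind : IndepFun (fun ω => ∏ i ∈ s, Y i ω) (Y j) μ := by
      have hfn : (fun ω => ∏ i ∈ s, Y i ω) = ∏ i ∈ s, Y i := by
        funext ω; rw [Finset.prod_apply]
      rw [hfn]
      exact h.indepFun_finset_prod_of_notMem hm hns
    have hint : Integrable (fun ω => ∏ i ∈ insert j s, Y i ω) μ := by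
      have := hind.symm.integrable_mul (hi j) ih.1
      try simp only [Pi.mul_apply] at this
      have heq : (fun ω => ∏ i ∈ insert j s, Y i ω) = fun ω => Y j ω * ∏ i ∈ s, Y i ω := by
        funext ω; rw [Finset.prod_insert hns]
      rw [heq]; exact this
    refine ⟨hint, ?_⟩
    have heq : (fun ω => ∏ i ∈ insert j s, Y i ω) = fun ω => Y j ω * ∏ i ∈ s, Y i ω := by
      funext ω; rw [Finset.prod_insert hns]
    rw [heq, Finset.prod_insert hns, indepFun_integral_mul_complex hind.symm (hi j) ih.1, ih.2]

end AuxProb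


lemma pow_self_le_factorial_mul_exp : ∀ u : ℕ, (u : ℝ) ^ u ≤ u.factorial * Real.exp u := by
  intro u
  induction u with
  | zero => simp
  | succ n ih =>
    rw [show ((n+1:ℕ):ℝ) = (n:ℝ)+1 from by push_cast; ring]
    have h1 : ((n:ℝ) + 1) ^ n ≤ (n : ℝ) ^ n * Real.exp 1 := by
      rcases Nat.eq_zero_or_pos n with h | h
      · subst h
        norm_num
      · have hn : (0:ℝ) < n := by exact_mod_cast h
        have heq : (n:ℝ) + 1 = (n:ℝ) * (1 + 1/n) := by field_simp
        rw [heq, mul_pow]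
        have h2 : (1 + 1/(n:ℝ)) ^ n ≤ Real.exp 1 := by
          have hle : (1 + 1/(n:ℝ)) ≤ Real.exp (1/n) := by
            have := Real.add_one_le_exp (1/(n:ℝ)); linarith
          calc (1 + 1/(n:ℝ)) ^ n ≤ Real.exp (1/n) ^ n := by
                apply pow_le_pow_left₀ (by positivity) hle
            _ = Real.exp 1 := by
                rw [← Real.exp_nat_mul, mul_one_div, div_self (ne_of_gt hn)]
        exact mul_le_mul_of_nonneg_left h2 (by positivity)
    have h3 : ((n:ℝ) + 1) ^ (n + 1) = ((n:ℝ)+1) * ((n:ℝ)+1)^n := by ring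
    rw [h3]
    calc ((n:ℝ)+1) * ((n:ℝ)+1)^n ≤ ((n:ℝ)+1) * ((n:ℝ)^n * Real.exp 1) := by
          apply mul_le_mul_of_nonneg_left h1 (by positivity)
      _ ≤ ((n:ℝ)+1) * ((n.factorial * Real.exp n) * Real.exp 1) := by
          apply mul_le_mul_of_nonneg_left _ (by positivity)
          apply mul_le_mul_of_nonneg_right ih (Real.exp_pos 1).le
      _ = (n+1).factorial * Real.exp ((n:ℝ)+1) := by
          rw [mul_assoc ((n.factorial:ℝ)), ← Real.exp_add, Nat.factorial_succ]
          push_cast; ring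

lemma esymm_sum_bound {ι : Type*} [Fintype ι] [DecidableEq ι] (w : ι → ℝ) (hw : ∀ i, 0 ≤ w i) :
    ∀ u : ℕ, (u.factorial : ℝ) * ∑ S ∈ Finset.powersetCard u (univ : Finset ι), ∏ i ∈ S, w i
      ≤ (∑ i, w i) ^ u := by
  intro u
  induction u with
  | zero => simp
  | succ n ih =>
    have key : (n + 1 : ℝ) * ∑ S ∈ powersetCard (n+1) (univ : Finset ι), ∏ i ∈ S, w i
        ≤ (∑ i, w i) * ∑ S ∈ powersetCard n (univ : Finset ι), ∏ i ∈ S, w i := by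
      have lhs_eq : (n + 1 : ℝ) * ∑ S ∈ powersetCard (n+1) (univ : Finset ι), ∏ i ∈ S, w i
          = ∑ S ∈ powersetCard (n+1) (univ : Finset ι), ∑ i ∈ S, w i * ∏ j ∈ S.erase i, w j := by
        rw [Finset.mul_sum]
        apply Finset.sum_congr rfl
        intro S hS
        rw [Finset.mem_powersetCard] at hS
        have heq : ∑ i ∈ S, w i * ∏ j ∈ S.erase i, w j = ∑ _i ∈ S, ∏ j ∈ S, w j := by
          apply Finset.sum_congr rfl
          intro i hi
          rw [Finset.mul_prod_erase S w hi]
        rw [heq, Finset.sum_const, hS.2]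
        push_cast; ring
      rw [lhs_eq]
      have reindex : ∑ S ∈ powersetCard (n+1) (univ : Finset ι), ∑ i ∈ S, w i * ∏ j ∈ S.erase i, w j
          = ∑ T ∈ powersetCard n (univ : Finset ι), ∑ i ∈ univ \ T, w i * ∏ j ∈ T, w j := by
        rw [Finset.sum_sigma', Finset.sum_sigma']
        apply Finset.sum_nbij' (fun p => ⟨p.1.erase p.2, p.2⟩) (fun p => ⟨insert p.2 p.1, p.2⟩)
        · rintro ⟨S, i⟩ hSi
          simp only [Finset.mem_sigma, Finset.mem_powersetCard] at hSi ⊢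
          refine ⟨⟨Finset.subset_univ _, ?_⟩, ?_⟩
          · rw [Finset.card_erase_of_mem hSi.2, hSi.1.2]
            omega
          · simp [Finset.mem_sdiff, Finset.notMem_erase]
        · rintro ⟨T, i⟩ hTi
          simp only [Finset.mem_sigma, Finset.mem_powersetCard, Finset.mem_sdiff] at hTi ⊢
          refine ⟨⟨Finset.subset_univ _, ?_⟩, Finset.mem_insert_self _ _⟩
          rw [Finset.card_insert_of_notMem hTi.2.2, hTi.1.2]
        · rintro ⟨S, i⟩ hSi
          simp only [Finset.mem_sigma, Finset.mem_powersetCard] at hSi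
          simp only [Sigma.mk.inj_iff, heq_eq_eq, and_true]
          exact Finset.insert_erase hSi.2
        · rintro ⟨T, i⟩ hTi
          simp only [Finset.mem_sigma, Finset.mem_powersetCard, Finset.mem_sdiff] at hTi
          simp only [Sigma.mk.inj_iff, heq_eq_eq, and_true]
          exact Finset.erase_insert hTi.2.2
        · rintro ⟨S, i⟩ hSi
          simp only [Finset.mem_sigma, Finset.mem_powersetCard] at hSi
          congr 1
      rw [reindex]
      calc ∑ T ∈ powersetCard n (univ : Finset ι), ∑ i ∈ univ \ T, w i * ∏ j ∈ T, w j
          ≤ ∑ T ∈ powersetCard n (univ : Finset ι), (∑ i, w i) * ∏ j ∈ T, w j := by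
            apply Finset.sum_le_sum; intro T hT
            rw [← Finset.sum_mul]
            exact mul_le_mul_of_nonneg_right
              (Finset.sum_le_sum_of_subset_of_nonneg Finset.sdiff_subset (fun i _ _ => hw i))
              (Finset.prod_nonneg fun j _ => hw j)
        _ = (∑ i, w i) * ∑ S ∈ powersetCard n (univ : Finset ι), ∏ i ∈ S, w i :=
            (Finset.mul_sum _ _ _).symm
    have hfac : ((n+1).factorial : ℝ) = (n+1 : ℝ) * n.factorial := by
      rw [Nat.factorial_succ]; push_cast; ring
    calc ((n+1).factorial : ℝ) * ∑ S ∈ powersetCard (n+1) (univ : Finset ι), ∏ i ∈ S, w i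
        = (n.factorial : ℝ) * ((n+1:ℝ) * ∑ S ∈ powersetCard (n+1) (univ : Finset ι), ∏ i ∈ S, w i) := by
          rw [hfac]; ring
      _ ≤ (n.factorial : ℝ) * ((∑ i, w i) * ∑ S ∈ powersetCard n (univ : Finset ι), ∏ i ∈ S, w i) := by
          apply mul_le_mul_of_nonneg_left key (by positivity)
      _ = (∑ i, w i) * ((n.factorial : ℝ) * ∑ S ∈ powersetCard n (univ : Finset ι), ∏ i ∈ S, w i) := by ring
      _ ≤ (∑ i, w i) * (∑ i, w i)^n := by
          apply mul_le_mul_of_nonneg_left ih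
          exact Finset.sum_nonneg fun i _ => hw i
      _ = (∑ i, w i)^(n+1) := by ring


lemma key_term_bound {r p u : ℕ} (hrp : r = 2 * p) (hp1 : 1 ≤ p) (hu1 : 1 ≤ u) (hup : u ≤ p)
    {L : ℝ} (hL : 0 ≤ L) :
    (u:ℝ)^r * Real.exp (-(2*L*u)) ≤ (u.factorial : ℝ) * ((2*r/(1+2*L))^r / p) := by
  have hu : (0:ℝ) < u := by exact_mod_cast hu1
  have hp : (0:ℝ) < p := by exact_mod_cast hp1
  have hr1 : 2 ≤ r := by omega
  have hr : (0:ℝ) < r := by positivity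
  set s : ℝ := 1 + 2*L with hs_def
  have hs : (0:ℝ) < s := by simp [hs_def]; linarith
  have hs1 : (1:ℝ) ≤ s := by simp [hs_def]; linarith
  -- logarithmic facts
  have f1 : (r:ℝ) * Real.log s ≤ r * Real.log r - r * Real.log u + s*u - r := by
    have hx : (0:ℝ) < s*u/r := by positivity
    have h := Real.log_le_sub_one_of_pos hx
    rw [Real.log_div (by positivity) (ne_of_gt hr), Real.log_mul (ne_of_gt hs) (ne_of_gt hu)] at h
    have := mul_le_mul_of_nonneg_left h (le_of_lt hr)
    have hne : (r:ℝ) ≠ 0 := ne_of_gt hr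
    calc (r:ℝ) * Real.log s = r * (Real.log s + Real.log u - Real.log r)
          - r * Real.log u + r * Real.log r := by ring
      _ ≤ r * (s*u/r - 1) - r * Real.log u + r * Real.log r := by linarith
      _ = r * Real.log r - r * Real.log u + s*u - r := by field_simp; ring
  have f2 : 2*(u:ℝ) - u * Real.log u ≤ 3 := by
    have hx : (0:ℝ) < Real.exp 1 / u := by positivity
    have h := Real.log_le_sub_one_of_pos hx
    rw [Real.log_div (by positivity) (ne_of_gt hu), Real.log_exp] at h
    -- 1 - log u ≤ e/u - 1
    have he3 : Real.exp 1 ≤ 3 := by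
      have := Real.exp_one_lt_d9; linarith
    have h2 : u * (1 - Real.log u) ≤ u * (Real.exp 1/u - 1) :=
      mul_le_mul_of_nonneg_left h (le_of_lt hu)
    have h3 : u * (Real.exp 1/u - 1) = Real.exp 1 - u := by field_simp
    nlinarith
  have f3 : Real.log p ≤ (p:ℝ) - 1 := Real.log_le_sub_one_of_pos hp
  have f4 : (p:ℝ) - 1 ≤ r + r * Real.log 2 - 3 := by
    have hl2 : (0.6931471803:ℝ) < Real.log 2 := Real.log_two_gt_d9
    have hrr : (r:ℝ) = 2*p := by exact_mod_cast hrp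
    have h5 : (1:ℝ) ≤ (p:ℝ) := by exact_mod_cast hp1
    have h6 : (1:ℝ) * 0.6931471803 ≤ (p:ℝ) * Real.log 2 :=
      mul_le_mul h5 hl2.le (by norm_num) (by positivity)
    have h7 : (r:ℝ)*Real.log 2 = 2*((p:ℝ)*Real.log 2) := by rw [hrr]; ring
    linarith
  -- main log inequality
  have main : (r:ℝ) * Real.log u - 2*L*u ≤
      u * Real.log u - u + r * (Real.log 2 + Real.log r - Real.log s) - Real.log p := by
    have hsu : s * u = u + 2*L*u := by rw [hs_def]; ring
    nlinarith [f1, f2, f3, f4]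
  -- exponentiate
  have hA : (u:ℝ)^r * Real.exp (-(2*L*u)) = Real.exp (r * Real.log u - 2*L*u) := by
    rw [← Real.log_pow, Real.exp_sub, Real.exp_log (by positivity)]
    rw [div_eq_mul_inv, ← Real.exp_neg]
  have hB : (u:ℝ)^u * Real.exp (-(u:ℝ)) * ((2*r/s)^r / p) =
      Real.exp (u * Real.log u - u + r * (Real.log 2 + Real.log r - Real.log s) - Real.log p) := by
    have h2rs : Real.log ((2*r/s)^r) = r * (Real.log 2 + Real.log r - Real.log s) := by
      rw [Real.log_pow, Real.log_div (by positivity) (ne_of_gt hs),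
        Real.log_mul (by norm_num) (ne_of_gt hr)]
    have e1 : Real.exp (u*Real.log u) = (u:ℝ)^u := by
      rw [← Real.log_pow]; exact Real.exp_log (by positivity)
    have e2 : Real.exp ((r:ℝ)*(Real.log 2 + Real.log (r:ℝ) - Real.log s)) = (2*r/s)^r := by
      rw [← h2rs]; exact Real.exp_log (by positivity)
    rw [show (u:ℝ) * Real.log u - u + r * (Real.log 2 + Real.log (r:ℝ) - Real.log s)
        - Real.log p = (u*Real.log u + (r:ℝ)*(Real.log 2 + Real.log (r:ℝ) - Real.log s))
        - ((u:ℝ) + Real.log p) from by ring]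
    rw [Real.exp_sub, Real.exp_add, Real.exp_add, e1, e2, Real.exp_log hp, Real.exp_neg]
    field_simp
  have step1 : (u:ℝ)^r * Real.exp (-(2*L*u)) ≤ (u:ℝ)^u * Real.exp (-(u:ℝ)) * ((2*r/s)^r / p) := by
    rw [hA, hB]; exact Real.exp_le_exp.mpr main
  have hfac : (u:ℝ)^u * Real.exp (-(u:ℝ)) ≤ u.factorial := by
    have h := pow_self_le_factorial_mul_exp u
    have hepos : (0:ℝ) < Real.exp (u:ℝ) := Real.exp_pos _
    rw [Real.exp_neg, ← div_eq_mul_inv, div_le_iff₀ hepos]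
    exact h
  calc (u:ℝ)^r * Real.exp (-(2*L*u)) ≤ (u:ℝ)^u * Real.exp (-(u:ℝ)) * ((2*r/s)^r / p) := step1
    _ ≤ (u.factorial : ℝ) * ((2*r/s)^r / p) := by
        apply mul_le_mul_of_nonneg_right hfac (by positivity)


lemma moment_expansion {Ω : Type*} [MeasurableSpace Ω] (μ : Measure Ω) [IsProbabilityMeasure μ]
    {N : ℕ} (hN : 0 < N) {r p : ℕ} (hrp : r = 2 * p) (hp1 : 1 ≤ p)
    (q : ℝ) (hq0 : 0 < q)
    (X : Fin N → Ω → ℂ) (hmeas : ∀ i, Measurable (X i))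
    (hindep : iIndepFun X μ)
    (hint : ∀ i, Integrable (X i) μ)
    (hmean : ∀ i, ∫ ω, X i ω ∂μ = 0)
    (hintk : ∀ i, ∀ k, 2 ≤ k → k ≤ r → Integrable (fun ω => ‖X i ω‖ ^ k) μ)
    (hmom : ∀ i, ∀ k, 2 ≤ k → k ≤ r →
      ∫ ω, ‖X i ω‖ ^ k ∂μ ≤ 1 / (N * q ^ (k - 2)))
    (a : Fin N → ℂ) (ψ : ℝ) (hψ0 : 0 ≤ ψ) (hAq : ∀ i, ‖a i‖ ≤ q * ψ) :
    ∫ ω, ‖∑ i, a i * X i ω‖ ^ r ∂μ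
      ≤ ∑ u ∈ Finset.Icc 1 p, ((u:ℝ)^r / u.factorial) *
          ((∑ i, ‖a i‖^2 / (N:ℝ))^u * ψ^(r - 2*u)) := by
  classical
  set Z : Ω → ℂ := fun ω => ∑ i, a i * X i ω with hZ_def
  set W : (Fin p ⊕ Fin p) → Fin N → Ω → ℂ := fun j i ω =>
    Sum.elim (fun _ : Fin p => a i * X i ω) (fun _ : Fin p => (starRingEnd ℂ) (a i * X i ω)) j
    with hW_def
  have hcardD : Fintype.card (Fin p ⊕ Fin p) = r := by
    simp [Fintype.card_sum, hrp]; omega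
  -- step 1 : pointwise identity |Z|^r = Z^p conj(Z)^p
  have hF : ∀ ω, ((‖Z ω‖ ^ r : ℝ) : ℂ) = Z ω ^ p * (starRingEnd ℂ) (Z ω) ^ p := by
    intro ω
    rw [← mul_pow, Complex.mul_conj, Complex.normSq_eq_norm_sq]
    push_cast
    rw [← pow_mul, hrp, mul_comm 2 p]
  -- step 2 : expansion into monomials
  have hFexp : ∀ ω, Z ω ^ p * (starRingEnd ℂ) (Z ω) ^ p
      = ∑ d : (Fin p ⊕ Fin p) → Fin N, ∏ j, W j (d j) ω := by
    intro ω
    have e1 : ∏ j : Fin p ⊕ Fin p, (∑ i, W j i ω)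
        = (∑ i, a i * X i ω) ^ p * (∑ i, (starRingEnd ℂ) (a i * X i ω)) ^ p := by
      rw [Fintype.prod_sum_type]
      simp only [hW_def, Sum.elim_inl, Sum.elim_inr]
      rw [Finset.prod_const, Finset.prod_const, Finset.card_univ, Fintype.card_fin]
    have e2 : Z ω ^ p * (starRingEnd ℂ) (Z ω) ^ p = ∏ j : Fin p ⊕ Fin p, (∑ i, W j i ω) := by
      rw [e1]
      simp only [hZ_def]
      rw [map_sum]
    rw [e2, Finset.prod_univ_sum, Fintype.piFinset_univ]
  -- measurability of the per-coordinate maps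
  have hφmeas : ∀ (i : Fin N) (s : Finset (Fin p ⊕ Fin p)), Measurable (fun z : ℂ =>
      ∏ j ∈ s, Sum.elim (fun _ : Fin p => a i * z)
        (fun _ : Fin p => (starRingEnd ℂ) (a i * z)) j) := by
    intro i s
    apply Finset.measurable_prod
    intro j _
    cases j with
    | inl j =>
      simp only [Sum.elim_inl]
      exact measurable_id.const_mul (a i)
    | inr j =>
      simp only [Sum.elim_inr]
      exact Complex.continuous_conj.measurable.comp (measurable_id.const_mul (a i))
  -- fiber products as compositions
  have hYcomp : ∀ (i : Fin N) (s : Finset (Fin p ⊕ Fin p)),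
      (fun ω => ∏ j ∈ s, W j i ω) = (fun z : ℂ =>
        ∏ j ∈ s, Sum.elim (fun _ : Fin p => a i * z)
          (fun _ : Fin p => (starRingEnd ℂ) (a i * z)) j) ∘ (X i) := by
    intro i s
    funext ω
    simp only [Function.comp_apply, hW_def]
  have hYmeas : ∀ (i : Fin N) (s : Finset (Fin p ⊕ Fin p)),
      Measurable (fun ω => ∏ j ∈ s, W j i ω) := by
    intro i s
    rw [hYcomp i s]
    exact (hφmeas i s).comp (hmeas i)
  -- absolute value of a fiber product
  have hYabs : ∀ (i : Fin N) (s : Finset (Fin p ⊕ Fin p)) (ω : Ω),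
      ‖∏ j ∈ s, W j i ω‖
        = (‖a i‖ * ‖X i ω‖) ^ s.card := by
    intro i s ω
    rw [norm_prod]
    have : ∀ j ∈ s, ‖W j i ω‖ = ‖a i‖ * ‖X i ω‖ := by
      intro j _
      cases j with
      | inl j => simp only [hW_def, Sum.elim_inl]; rw [norm_mul]
      | inr j => simp only [hW_def, Sum.elim_inr]; rw [Complex.norm_conj, norm_mul]
    rw [Finset.prod_congr rfl this, Finset.prod_const]
  -- integrability of powers of |X i|
  have hXc : ∀ (i : Fin N) (c : ℕ), c ≤ r → Integrable (fun ω => ‖X i ω‖^c) μ := by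
    intro i c hcr
    match c with
    | 0 => simpa using (integrable_const (1:ℝ))
    | 1 =>
      simp only [pow_one]
      simpa using (hint i).norm
    | (k+2) => exact hintk i (k+2) (by omega) hcr
  have hcard_le : ∀ s : Finset (Fin p ⊕ Fin p), s.card ≤ r := by
    intro s
    calc s.card ≤ (univ : Finset (Fin p ⊕ Fin p)).card := Finset.card_le_univ s
      _ = r := by rw [Finset.card_univ, hcardD]
  -- integrability of fiber products
  have hYint : ∀ (i : Fin N) (s : Finset (Fin p ⊕ Fin p)),
      Integrable (fun ω => ∏ j ∈ s, W j i ω) μ := by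
    intro i s
    apply Integrable.mono' (((hXc i s.card (hcard_le s)).const_mul (‖a i‖^s.card)))
      ((hYmeas i s).aestronglyMeasurable)
    apply ae_of_all
    intro ω
    rw [hYabs i s ω, mul_pow]
  -- vanishing for singleton fibers
  have hY0 : ∀ (i : Fin N) (s : Finset (Fin p ⊕ Fin p)), s.card = 1 →
      ∫ ω, ∏ j ∈ s, W j i ω ∂μ = 0 := by
    intro i s hs1
    obtain ⟨j0, hj0⟩ := Finset.card_eq_one.mp hs1
    subst hj0
    simp only [Finset.prod_singleton]
    cases j0 with
    | inl j =>
      simp only [hW_def, Sum.elim_inl, ← smul_eq_mul]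
      rw [integral_smul, hmean i, smul_zero]
    | inr j =>
      simp only [hW_def, Sum.elim_inr]
      rw [integral_conj]
      simp only [← smul_eq_mul]
      rw [integral_smul, hmean i, smul_zero, map_zero]
  -- moment bound for fibers of size ≥ 2
  have hYb : ∀ (i : Fin N) (s : Finset (Fin p ⊕ Fin p)), 2 ≤ s.card →
      ‖∫ ω, ∏ j ∈ s, W j i ω ∂μ‖
        ≤ ψ^(s.card - 2) * (‖a i‖^2/(N:ℝ)) := by
    intro i s hs2
    set c := s.card with hc_def
    have hcr : c ≤ r := hcard_le s
    have hNr : (0:ℝ) < N := by exact_mod_cast hN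
    calc ‖∫ ω, ∏ j ∈ s, W j i ω ∂μ‖
        ≤ ∫ ω, ‖∏ j ∈ s, W j i ω‖ ∂μ := by
          have hh := norm_integral_le_integral_norm (μ := μ) (f := fun ω => ∏ j ∈ s, W j i ω)
          simpa only using hh
      _ = ‖a i‖^c * ∫ ω, ‖X i ω‖^c ∂μ := by
          rw [show (fun ω => ‖∏ j ∈ s, W j i ω‖)
              = fun ω => ‖a i‖^c * ‖X i ω‖^c from
            funext fun ω => by rw [hYabs i s ω, mul_pow], integral_const_mul]
      _ ≤ ‖a i‖^c * (1/((N:ℝ) * q^(c-2))) := by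
          apply mul_le_mul_of_nonneg_left (hmom i c hs2 hcr) (by positivity)
      _ ≤ ψ^(c - 2) * (‖a i‖^2/(N:ℝ)) := by
          have h1 : ‖a i‖^c = ‖a i‖^(c-2) * ‖a i‖^2 := by
            rw [← pow_add]; congr 1; omega
          have h2 : ‖a i‖^(c-2) * ‖a i‖^2
              ≤ (q^(c-2) * ψ^(c-2)) * ‖a i‖^2 := by
            apply mul_le_mul_of_nonneg_right _ (by positivity)
            rw [← mul_pow]
            exact pow_le_pow_left₀ (norm_nonneg _) (hAq i) _
          have heq : (q^(c-2) * ψ^(c-2)) * ‖a i‖^2 * (1/((N:ℝ)*q^(c-2)))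
              = ψ^(c-2) * (‖a i‖^2/(N:ℝ)) := by
            field_simp
          rw [h1, ← heq]
          apply mul_le_mul_of_nonneg_right h2 (by positivity)
  -- independence factorization per monomial
  have hfib_int : ∀ d : (Fin p ⊕ Fin p) → Fin N,
      Integrable (fun ω => ∏ j, W j (d j) ω) μ ∧
      ∫ ω, ∏ j, W j (d j) ω ∂μ
        = ∏ i ∈ Finset.image d univ,
            ∫ ω, ∏ j ∈ univ.filter (fun j => d j = i), W j i ω ∂μ := by
    intro d
    have hYind : iIndepFun
        (fun i ω => ∏ j ∈ univ.filter (fun j => d j = i), W j i ω) μ := by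
      have hcomp := hindep.comp (fun i => fun z : ℂ =>
        ∏ j ∈ univ.filter (fun j => d j = i), Sum.elim (fun _ : Fin p => a i * z)
          (fun _ : Fin p => (starRingEnd ℂ) (a i * z)) j) (fun i => hφmeas i _)
      have heq : (fun i (ω : Ω) => ∏ j ∈ univ.filter (fun j => d j = i), W j i ω)
          = fun i => (fun z : ℂ =>
            ∏ j ∈ univ.filter (fun j => d j = i), Sum.elim (fun _ : Fin p => a i * z)
              (fun _ : Fin p => (starRingEnd ℂ) (a i * z)) j) ∘ (X i) :=
        funext fun i => hYcomp i _
      rw [heq]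
      exact hcomp
    have hprod := iIndep_prod_integral hYind (fun i => hYmeas i _) (fun i => hYint i _)
      (Finset.image d univ)
    have hgroup : (fun ω => ∏ j, W j (d j) ω)
        = fun ω => ∏ i ∈ Finset.image d univ,
            ∏ j ∈ univ.filter (fun j => d j = i), W j i ω := by
      funext ω
      rw [← Finset.prod_fiberwise_of_maps_to
        (fun j _ => Finset.mem_image_of_mem d (Finset.mem_univ j)) (fun j => W j (d j) ω)]
      apply Finset.prod_congr rfl
      intro i _
      apply Finset.prod_congr rfl
      intro j hj
      rw [(Finset.mem_filter.mp hj).2]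
    constructor
    · rw [hgroup]; exact hprod.1
    · rw [hgroup]; exact hprod.2
  -- the main inequality down to a sum over valid monomials
  set V : Finset ((Fin p ⊕ Fin p) → Fin N) := univ.filter
    (fun d => ∀ i ∈ Finset.image d univ, 2 ≤ (univ.filter (fun j => d j = i)).card)
    with hV_def
  have main_chain : ∫ ω, ‖Z ω‖^r ∂μ
      ≤ ∑ d ∈ V, ∏ i ∈ Finset.image d univ,
          ‖∫ ω, ∏ j ∈ univ.filter (fun j => d j = i), W j i ω ∂μ‖ := by
    have hIeq : (∫ ω, Z ω ^ p * (starRingEnd ℂ) (Z ω)^p ∂μ)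
        = ((∫ ω, ‖Z ω‖^r ∂μ : ℝ) : ℂ) := by
      rw [show (fun ω => Z ω ^ p * (starRingEnd ℂ) (Z ω)^p)
          = fun ω => ((‖Z ω‖^r : ℝ) : ℂ) from funext fun ω => (hF ω).symm]
      exact integral_ofReal
    have h1 : ∫ ω, ‖Z ω‖^r ∂μ
        ≤ ‖∫ ω, Z ω ^ p * (starRingEnd ℂ) (Z ω)^p ∂μ‖ := by
      rw [hIeq]
      calc (∫ ω, ‖Z ω‖^r ∂μ)
          = (((∫ ω, ‖Z ω‖^r ∂μ : ℝ) : ℂ)).re := by rw [Complex.ofReal_re]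
        _ ≤ ‖_‖ := Complex.re_le_norm _
    have h2 : ∫ ω, Z ω ^ p * (starRingEnd ℂ) (Z ω)^p ∂μ
        = ∑ d : (Fin p ⊕ Fin p) → Fin N, ∫ ω, ∏ j, W j (d j) ω ∂μ := by
      rw [show (fun ω => Z ω ^ p * (starRingEnd ℂ) (Z ω)^p)
          = fun ω => ∑ d : (Fin p ⊕ Fin p) → Fin N, ∏ j, W j (d j) ω from funext hFexp]
      exact integral_finset_sum _ (fun d _ => (hfib_int d).1)
    calc ∫ ω, ‖Z ω‖^r ∂μ
        ≤ ‖∫ ω, Z ω ^ p * (starRingEnd ℂ) (Z ω)^p ∂μ‖ := h1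
      _ = ‖∑ d : (Fin p ⊕ Fin p) → Fin N, ∫ ω, ∏ j, W j (d j) ω ∂μ‖ := by rw [h2]
      _ ≤ ∑ d : (Fin p ⊕ Fin p) → Fin N, ‖∫ ω, ∏ j, W j (d j) ω ∂μ‖ :=
          norm_sum_le _ _
      _ = ∑ d : (Fin p ⊕ Fin p) → Fin N, ∏ i ∈ Finset.image d univ,
            ‖∫ ω, ∏ j ∈ univ.filter (fun j => d j = i), W j i ω ∂μ‖ := by
          apply Finset.sum_congr rfl
          intro d _
          rw [(hfib_int d).2, norm_prod]
      _ = ∑ d ∈ V, ∏ i ∈ Finset.image d univ,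
            ‖∫ ω, ∏ j ∈ univ.filter (fun j => d j = i), W j i ω ∂μ‖ := by
          symm
          apply Finset.sum_subset (show V ⊆ univ from Finset.subset_univ V)
          intro d _ hdV
          rw [hV_def, Finset.mem_filter] at hdV
          push_neg at hdV
          obtain ⟨i0, hi0, hc0⟩ := hdV (Finset.mem_univ d)
          have hc1 : (univ.filter (fun j => d j = i0)).card = 1 := by
            have hpos : 0 < (univ.filter (fun j => d j = i0)).card := by
              rw [Finset.card_pos]
              obtain ⟨j0, _, hj0⟩ := Finset.mem_image.mp hi0
              exact ⟨j0, Finset.mem_filter.mpr ⟨Finset.mem_univ j0, hj0⟩⟩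
            omega
          apply Finset.prod_eq_zero hi0
          rw [hY0 i0 _ hc1, norm_zero]
  -- fiber cardinality sums
  have hcsum : ∀ d : (Fin p ⊕ Fin p) → Fin N,
      ∑ i ∈ Finset.image d univ, (univ.filter (fun j => d j = i)).card = r := by
    intro d
    have := Finset.card_eq_sum_card_fiberwise
      (f := d) (s := univ) (t := Finset.image d univ)
      (fun j _ => Finset.mem_image_of_mem d (Finset.mem_univ j))
    rw [Finset.card_univ, hcardD] at this
    exact this.symm
  -- per valid monomial bound
  have hdV : ∀ d ∈ V, ∏ i ∈ Finset.image d univ,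
        ‖∫ ω, ∏ j ∈ univ.filter (fun j => d j = i), W j i ω ∂μ‖
      ≤ ψ^(r - 2*(Finset.image d univ).card)
        * ∏ i ∈ Finset.image d univ, (‖a i‖^2/(N:ℝ)) := by
    intro d hd
    rw [hV_def, Finset.mem_filter] at hd
    have h2c := hd.2
    have hsum_sub : ∑ i ∈ Finset.image d univ, ((univ.filter (fun j => d j = i)).card - 2)
        = r - 2*(Finset.image d univ).card := by
      have ha1 : ∑ i ∈ Finset.image d univ, ((univ.filter (fun j => d j = i)).card - 2 + 2)
          = ∑ i ∈ Finset.image d univ, (univ.filter (fun j => d j = i)).card :=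
        Finset.sum_congr rfl (fun i hi => Nat.sub_add_cancel (h2c i hi))
      have ha2 : ∑ i ∈ Finset.image d univ, ((univ.filter (fun j => d j = i)).card - 2 + 2)
          = ∑ i ∈ Finset.image d univ, ((univ.filter (fun j => d j = i)).card - 2)
            + 2*(Finset.image d univ).card := by
        rw [Finset.sum_add_distrib, Finset.sum_const, smul_eq_mul]
        ring
      have ha3 := hcsum d
      omega
    calc ∏ i ∈ Finset.image d univ,
          ‖∫ ω, ∏ j ∈ univ.filter (fun j => d j = i), W j i ω ∂μ‖
        ≤ ∏ i ∈ Finset.image d univ,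
            (ψ^((univ.filter (fun j => d j = i)).card - 2) * (‖a i‖^2/(N:ℝ))) := by
          apply Finset.prod_le_prod (fun i _ => norm_nonneg _)
          intro i hi
          exact hYb i _ (h2c i hi)
      _ = (∏ i ∈ Finset.image d univ, ψ^((univ.filter (fun j => d j = i)).card - 2))
            * ∏ i ∈ Finset.image d univ, (‖a i‖^2/(N:ℝ)) :=
          Finset.prod_mul_distrib
      _ = ψ^(r - 2*(Finset.image d univ).card)
            * ∏ i ∈ Finset.image d univ, (‖a i‖^2/(N:ℝ)) := by
          rw [Finset.prod_pow_eq_pow_sum, hsum_sub]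
  -- nonnegativity of the set weights
  have hGpos : ∀ S : Finset (Fin N),
      0 ≤ ψ^(r - 2*S.card) * ∏ i ∈ S, (‖a i‖^2/(N:ℝ)) := by
    intro S
    apply mul_nonneg (pow_nonneg hψ0 _)
    exact Finset.prod_nonneg fun i _ => by positivity
  -- image cardinality bounds for valid monomials
  have himg_bounds : ∀ d ∈ V, 1 ≤ (Finset.image d univ).card ∧ (Finset.image d univ).card ≤ p := by
    intro d hd
    rw [hV_def, Finset.mem_filter] at hd
    constructor
    · apply Finset.card_pos.mpr
      apply Finset.Nonempty.image
      exact ⟨Sum.inl ⟨0, hp1⟩, Finset.mem_univ _⟩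
    · have h2 : 2*(Finset.image d univ).card
          ≤ ∑ i ∈ Finset.image d univ, (univ.filter (fun j => d j = i)).card := by
        calc 2*(Finset.image d univ).card = ∑ _i ∈ Finset.image d univ, 2 := by
              rw [Finset.sum_const, smul_eq_mul]; ring
          _ ≤ _ := Finset.sum_le_sum hd.2
      rw [hcsum d] at h2
      omega
  have hw0 : ∀ i : Fin N, 0 ≤ ‖a i‖^2/(N:ℝ) := fun i => by positivity
  -- assemble everything
  calc ∫ ω, ‖Z ω‖^r ∂μ
      ≤ ∑ d ∈ V, ∏ i ∈ Finset.image d univ,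
          ‖∫ ω, ∏ j ∈ univ.filter (fun j => d j = i), W j i ω ∂μ‖ := main_chain
    _ ≤ ∑ d ∈ V, (ψ^(r - 2*(Finset.image d univ).card)
          * ∏ i ∈ Finset.image d univ, (‖a i‖^2/(N:ℝ))) := Finset.sum_le_sum hdV
    _ = ∑ S ∈ (univ : Finset (Fin N)).powerset,
          ∑ d ∈ V.filter (fun d => Finset.image d univ = S),
            (ψ^(r - 2*S.card) * ∏ i ∈ S, (‖a i‖^2/(N:ℝ))) := by
        rw [← Finset.sum_fiberwise_of_maps_to (g := fun d => Finset.image d univ)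
          (t := (univ : Finset (Fin N)).powerset)
          (fun d _ => Finset.mem_powerset.mpr (Finset.subset_univ _))
          (fun d => ψ^(r - 2*(Finset.image d univ).card)
            * ∏ i ∈ Finset.image d univ, (‖a i‖^2/(N:ℝ)))]
        apply Finset.sum_congr rfl
        intro S _
        apply Finset.sum_congr rfl
        intro d hd
        rw [(Finset.mem_filter.mp hd).2]
    _ ≤ ∑ S ∈ (univ : Finset (Fin N)).powerset,
          (if 1 ≤ S.card ∧ S.card ≤ p then
            ((S.card:ℝ))^r * (ψ^(r - 2*S.card) * ∏ i ∈ S, (‖a i‖^2/(N:ℝ)))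
          else 0) := by
        apply Finset.sum_le_sum
        intro S _
        by_cases hfe : (V.filter (fun d => Finset.image d univ = S)).Nonempty
        · obtain ⟨d0, hd0⟩ := hfe
          have hd0f := Finset.mem_filter.mp hd0
          have hb := himg_bounds d0 hd0f.1
          rw [hd0f.2] at hb
          rw [if_pos hb, Finset.sum_const, nsmul_eq_mul]
          apply mul_le_mul_of_nonneg_right _ (hGpos S)
          have hsub : V.filter (fun d => Finset.image d univ = S)
              ⊆ Fintype.piFinset (fun _ : Fin p ⊕ Fin p => S) := by
            intro d hd
            rw [Finset.mem_filter] at hd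
            rw [Fintype.mem_piFinset]
            intro j
            rw [← hd.2]
            exact Finset.mem_image_of_mem d (Finset.mem_univ j)
          have hcardle := Finset.card_le_card hsub
          have hpc : (Fintype.piFinset (fun _ : Fin p ⊕ Fin p => S)).card = S.card ^ r := by
            rw [Fintype.card_piFinset, Finset.prod_const, Finset.card_univ, hcardD]
          rw [hpc] at hcardle
          exact_mod_cast hcardle
        · rw [Finset.not_nonempty_iff_eq_empty] at hfe
          rw [hfe, Finset.sum_empty]
          split
          · exact mul_nonneg (by positivity) (hGpos S)
          · exact le_refl 0
    _ = ∑ S ∈ (univ : Finset (Fin N)).powerset.filter (fun S => 1 ≤ S.card ∧ S.card ≤ p),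
          ((S.card:ℝ))^r * (ψ^(r - 2*S.card) * ∏ i ∈ S, (‖a i‖^2/(N:ℝ))) :=
        (Finset.sum_filter _ _).symm
    _ = ∑ u ∈ Finset.Icc 1 p,
          ∑ S ∈ ((univ : Finset (Fin N)).powerset.filter
              (fun S => 1 ≤ S.card ∧ S.card ≤ p)).filter (fun S => S.card = u),
            ((S.card:ℝ))^r * (ψ^(r - 2*S.card) * ∏ i ∈ S, (‖a i‖^2/(N:ℝ))) := by
        exact (Finset.sum_fiberwise_of_maps_to (fun S hS => by
          rw [Finset.mem_filter] at hS
          exact Finset.mem_Icc.mpr hS.2) _).symm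
    _ ≤ ∑ u ∈ Finset.Icc 1 p,
          ((u:ℝ)^r * ψ^(r - 2*u) * ((∑ i, ‖a i‖^2/(N:ℝ))^u / u.factorial)) := by
        apply Finset.sum_le_sum
        intro u hu
        have hfacpos : (0:ℝ) < u.factorial := by exact_mod_cast Nat.factorial_pos u
        calc ∑ S ∈ ((univ : Finset (Fin N)).powerset.filter
              (fun S => 1 ≤ S.card ∧ S.card ≤ p)).filter (fun S => S.card = u),
              ((S.card:ℝ))^r * (ψ^(r - 2*S.card) * ∏ i ∈ S, (‖a i‖^2/(N:ℝ)))
            = ∑ S ∈ ((univ : Finset (Fin N)).powerset.filter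
                (fun S => 1 ≤ S.card ∧ S.card ≤ p)).filter (fun S => S.card = u),
              ((u:ℝ))^r * (ψ^(r - 2*u) * ∏ i ∈ S, (‖a i‖^2/(N:ℝ))) := by
              apply Finset.sum_congr rfl
              intro S hS
              rw [(Finset.mem_filter.mp hS).2]
          _ ≤ ∑ S ∈ Finset.powersetCard u (univ : Finset (Fin N)),
              ((u:ℝ))^r * (ψ^(r - 2*u) * ∏ i ∈ S, (‖a i‖^2/(N:ℝ))) := by
              apply Finset.sum_le_sum_of_subset_of_nonneg
              · intro S hS
                rw [Finset.mem_filter] at hS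
                rw [Finset.mem_powersetCard]
                exact ⟨Finset.subset_univ _, hS.2⟩
              · intro S _ _
                apply mul_nonneg (by positivity)
                apply mul_nonneg (by positivity)
                exact Finset.prod_nonneg fun i _ => hw0 i
          _ = (u:ℝ)^r * ψ^(r - 2*u) * ∑ S ∈ Finset.powersetCard u (univ : Finset (Fin N)),
                ∏ i ∈ S, (‖a i‖^2/(N:ℝ)) := by
              rw [Finset.mul_sum]
              apply Finset.sum_congr rfl
              intro S _
              ring
          _ ≤ (u:ℝ)^r * ψ^(r - 2*u) * ((∑ i, ‖a i‖^2/(N:ℝ))^u / u.factorial) := by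
              apply mul_le_mul_of_nonneg_left _ (by positivity)
              rw [le_div_iff₀ hfacpos]
              have := esymm_sum_bound (fun i => ‖a i‖^2/(N:ℝ)) hw0 u
              linarith
    _ = ∑ u ∈ Finset.Icc 1 p, ((u:ℝ)^r / u.factorial) *
          ((∑ i, ‖a i‖^2 / (N:ℝ))^u * ψ^(r - 2*u)) := by
        apply Finset.sum_congr rfl
        intro u _
        ring

/-- Linear large deviation bound for sparse vectors: if `X₁,…,X_N` are independent, centered,
with `E|X_i|^k ≤ 1/(N q^{k−2})` for `2 ≤ k ≤ r` (`r ≥ 2` even, `1 ≤ q ≤ √N`), and the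
deterministic coefficients satisfy `((1/N)∑|a_i|²)^{1/2} ≤ γ` and `(max_i |a_i|)/q ≤ ψ`, then
`‖∑ a_i X_i‖_r ≤ max (2r/(1 + 2(log(ψ/γ))₊)) 2 * max γ ψ`. -/
theorem stmt_10 {Ω : Type*} [MeasurableSpace Ω] (μ : Measure Ω) [IsProbabilityMeasure μ]
    {N : ℕ} (r : ℕ) (hr : Even r) (hr2 : 2 ≤ r)
    (q : ℝ) (hq1 : 1 ≤ q) (hqN : q ≤ Real.sqrt N)
    (X : Fin N → Ω → ℂ) (hmeas : ∀ i, Measurable (X i))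
    (hindep : iIndepFun X μ)
    (hint : ∀ i, Integrable (X i) μ)
    (hmean : ∀ i, ∫ ω, X i ω ∂μ = 0)
    (hintk : ∀ i, ∀ k, 2 ≤ k → k ≤ r → Integrable (fun ω => ‖X i ω‖ ^ k) μ)
    (hmom : ∀ i, ∀ k, 2 ≤ k → k ≤ r →
      ∫ ω, ‖X i ω‖ ^ k ∂μ ≤ 1 / (N * q ^ (k - 2)))
    (a : Fin N → ℂ) (γ ψ : ℝ)
    (hγ : Real.sqrt ((1 / N) * ∑ i, ‖a i‖ ^ 2) ≤ γ)
    (hψ : (⨆ i, ‖a i‖) / q ≤ ψ) :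
    (∫ ω, ‖∑ i, a i * X i ω‖ ^ r ∂μ) ^ ((1 : ℝ) / r)
      ≤ max ((2 * r : ℝ) / (1 + 2 * max (Real.log (ψ / γ)) 0)) 2 * max γ ψ := by
  classical
  have hγ0 : 0 ≤ γ := le_trans (Real.sqrt_nonneg _) hγ
  have hq0 : (0:ℝ) < q := lt_of_lt_of_le one_pos hq1
  set L : ℝ := max (Real.log (ψ / γ)) 0 with hL_def
  set M : ℝ := max ((2 * r : ℝ) / (1 + 2 * L)) 2 with hM_def
  set T : ℝ := max γ ψ with hT_def
  have hL0 : 0 ≤ L := le_max_right _ _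
  have hM2 : (2:ℝ) ≤ M := le_max_right _ _
  have hT0 : 0 ≤ T := le_trans hγ0 (le_max_left _ _)
  have hMT0 : 0 ≤ M * T := mul_nonneg (by linarith) hT0
  have hrne : (r:ℝ) ≠ 0 := by positivity
  -- reduce to the r-th moment bound
  have hrpow : ∀ J : ℝ, 0 ≤ J → J ≤ (M*T)^r →
      J ^ ((1:ℝ)/r) ≤ M * T := by
    intro J hJ0 hJle
    have h1 : J ^ ((1:ℝ)/r) ≤ ((M*T)^r) ^ ((1:ℝ)/r) :=
      Real.rpow_le_rpow hJ0 hJle (by positivity)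
    have h2 : ((M*T)^r : ℝ) ^ ((1:ℝ)/r) = M*T := by
      rw [← Real.rpow_natCast (M*T) r, ← Real.rpow_mul hMT0]
      rw [mul_one_div, div_self hrne, Real.rpow_one]
    rw [h2] at h1; exact h1
  -- the zero-coefficient degenerate case
  have hzero : (∀ i, a i = 0) → (∫ ω, ‖∑ i, a i * X i ω‖ ^ r ∂μ) ^ ((1 : ℝ) / r)
      ≤ M * T := by
    intro ha
    have : ∀ ω, ‖∑ i, a i * X i ω‖ ^ r = 0 := by
      intro ω
      have : ∑ i, a i * X i ω = 0 := by
        apply Finset.sum_eq_zero; intro i _; rw [ha i, zero_mul]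
      rw [this]; simp [zero_pow (by omega : r ≠ 0)]
    rw [show (fun ω => ‖∑ i, a i * X i ω‖ ^ r) = fun _ => (0:ℝ) from funext this]
    rw [integral_zero, Real.zero_rpow (by positivity)]
    exact hMT0
  rcases Nat.eq_zero_or_pos N with hN | hN
  · -- N = 0
    subst hN
    exact hzero (fun i => absurd i.2 (by omega))
  -- N ≥ 1
  have hbdd : BddAbove (Set.range fun i => ‖a i‖) := Set.Finite.bddAbove (Set.finite_range _)
  haveI : Nonempty (Fin N) := ⟨⟨0, hN⟩⟩
  have hψ0 : 0 ≤ ψ := by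
    refine le_trans ?_ hψ
    apply div_nonneg _ hq0.le
    exact le_trans (norm_nonneg _) (le_ciSup hbdd ⟨0, hN⟩)
  have hAq : ∀ i, ‖a i‖ ≤ q * ψ := by
    intro i
    have h1 : ‖a i‖ ≤ ⨆ i, ‖a i‖ := le_ciSup hbdd i
    have h2 : (⨆ i, ‖a i‖) ≤ q * ψ := by
      rw [div_le_iff₀ hq0] at hψ; linarith [hψ]
    linarith
  by_cases hγz : γ = 0
  · -- all coefficients vanish
    apply hzero
    intro i
    have hsum : (1 / (N:ℝ)) * ∑ i, ‖a i‖ ^ 2 ≤ 0 := by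
      by_contra hpos
      push_neg at hpos
      have := Real.sqrt_pos.mpr hpos
      rw [hγz] at hγ; linarith
    have hNpos : (0:ℝ) < 1/(N:ℝ) := by positivity
    have hsum2 : ∑ i, ‖a i‖ ^ 2 ≤ 0 := by
      nlinarith
    have : ‖a i‖ ^ 2 = 0 := by
      have h1 : ∀ j ∈ (univ : Finset (Fin N)), (0:ℝ) ≤ ‖a j‖ ^ 2 :=
        fun j _ => by positivity
      have heach := Finset.single_le_sum h1 (mem_univ i)
      have hge := h1 i (mem_univ i)
      linarith
    have := pow_eq_zero_iff (n := 2) (by norm_num) |>.mp this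
    exact norm_eq_zero.mp this
  have hγpos : 0 < γ := lt_of_le_of_ne hγ0 (Ne.symm hγz)
  have hTpos : 0 < T := lt_of_lt_of_le hγpos (le_max_left _ _)
  -- sum of squares bound
  have hSa : ∑ i, ‖a i‖ ^ 2 ≤ N * γ^2 := by
    have h0 : 0 ≤ (1 / (N:ℝ)) * ∑ i, ‖a i‖ ^ 2 := by
      apply mul_nonneg (by positivity)
      exact Finset.sum_nonneg fun j _ => by positivity
    have h1 : (1 / (N:ℝ)) * ∑ i, ‖a i‖ ^ 2 ≤ γ^2 := by
      have := Real.sqrt_le_sqrt (le_of_eq (rfl : (1 / (N:ℝ)) * ∑ i, ‖a i‖ ^ 2 = _))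
      calc (1 / (N:ℝ)) * ∑ i, ‖a i‖ ^ 2
          = Real.sqrt ((1 / (N:ℝ)) * ∑ i, ‖a i‖ ^ 2) ^ 2 := (Real.sq_sqrt h0).symm
        _ ≤ γ^2 := by apply pow_le_pow_left₀ (Real.sqrt_nonneg _) hγ
    have hNpos : (0:ℝ) < N := by exact_mod_cast hN
    rw [div_mul_eq_mul_div, one_mul, div_le_iff₀ hNpos] at h1
    linarith [h1]
  -- unified exponential bound on coefficient products
  have C1 : ∀ u : ℕ, 2*u ≤ r → γ^(2*u) * ψ^(r - 2*u) ≤ T^r * Real.exp (-(2*L*u)) := by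
    intro u hur
    by_cases hψγ : ψ ≤ γ
    · have hLz : L = 0 := by
        rw [hL_def, max_eq_right]
        apply Real.log_nonpos
        · positivity
        · rw [div_le_one hγpos]; exact hψγ
      rw [hLz]
      simp only [mul_zero, zero_mul, neg_zero, Real.exp_zero, mul_one]
      have hTγ : T = γ := by rw [hT_def, max_eq_left hψγ]
      rw [hTγ]
      calc γ^(2*u) * ψ^(r-2*u) ≤ γ^(2*u) * γ^(r-2*u) := by
            apply mul_le_mul_of_nonneg_left (pow_le_pow_left₀ hψ0 hψγ _) (by positivity)
        _ = γ^r := by rw [← pow_add]; congr 1; omega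
    · push_neg at hψγ
      have hψpos : 0 < ψ := lt_trans hγpos hψγ
      have hTψ : T = ψ := by rw [hT_def, max_eq_right hψγ.le]
      have hLlog : L = Real.log (ψ/γ) := by
        rw [hL_def, max_eq_left]
        apply Real.log_nonneg
        rw [le_div_iff₀ hγpos]; linarith
      have hexp : Real.exp (-L) = γ/ψ := by
        rw [hLlog, ← Real.log_inv, Real.exp_log (by positivity)]
        rw [inv_div]
      have hγψ : γ = ψ * Real.exp (-L) := by rw [hexp]; field_simp
      have hee : (Real.exp (-L))^(2*u) = Real.exp (-(2*L*u)) := by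
        rw [← Real.exp_nat_mul]; congr 1; push_cast; ring
      rw [hTψ, hγψ, mul_pow, hee,
        show ψ ^ (2*u) * Real.exp (-(2*L*(u:ℝ))) * ψ ^ (r - 2*u)
          = (ψ^(2*u) * ψ^(r-2*u)) * Real.exp (-(2*L*(u:ℝ))) from by ring,
        ← pow_add, show 2*u + (r - 2*u) = r from by omega]
  obtain ⟨p, hp⟩ := hr
  have hrp : r = 2 * p := by omega
  have hp1 : 1 ≤ p := by omega
  -- main moment bound
  have KEY : ∫ ω, ‖∑ i, a i * X i ω‖ ^ r ∂μ
      ≤ ∑ u ∈ Finset.Icc 1 p, ((u:ℝ)^r / u.factorial) * (γ^(2*u) * ψ^(r - 2*u)) := by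
    have hME := moment_expansion μ hN hrp hp1 q hq0 X hmeas hindep hint hmean hintk hmom
      a ψ hψ0 hAq
    refine le_trans hME (Finset.sum_le_sum ?_)
    intro u hu
    rw [Finset.mem_Icc] at hu
    have h2ur : 2*u ≤ r := by omega
    have hwsum : ∑ i, ‖a i‖^2/(N:ℝ) ≤ γ^2 := by
      rw [← Finset.sum_div]
      have hNpos : (0:ℝ) < N := by exact_mod_cast hN
      rw [div_le_iff₀ hNpos]
      linarith [hSa]
    have hwnn : 0 ≤ ∑ i, ‖a i‖^2/(N:ℝ) :=
      Finset.sum_nonneg fun i _ => by positivity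
    apply mul_le_mul_of_nonneg_left _ (by positivity)
    apply mul_le_mul_of_nonneg_right _ (by positivity)
    calc (∑ i, ‖a i‖^2/(N:ℝ))^u ≤ (γ^2)^u := pow_le_pow_left₀ hwnn hwsum u
      _ = γ^(2*u) := by rw [← pow_mul]
  have hfinal : ∑ u ∈ Finset.Icc 1 p, ((u:ℝ)^r / u.factorial) * (γ^(2*u) * ψ^(r - 2*u))
      ≤ (M*T)^r := by
    have hcard : (Finset.Icc 1 p).card = p := by
      rw [Nat.card_Icc]; omega
    have hterm : ∀ u ∈ Finset.Icc 1 p,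
        ((u:ℝ)^r / u.factorial) * (γ^(2*u) * ψ^(r - 2*u)) ≤ (M*T)^r / p := by
      intro u hu
      rw [Finset.mem_Icc] at hu
      have hu1 : 1 ≤ u := hu.1
      have hup : u ≤ p := hu.2
      have h2ur : 2*u ≤ r := by omega
      have hfacpos : (0:ℝ) < u.factorial := by exact_mod_cast Nat.factorial_pos u
      have hk := key_term_bound hrp hp1 hu1 hup hL0
      have hMb : (2*(r:ℝ))/(1+2*L) ≤ M := by
        rw [hM_def]; push_cast; exact le_max_left _ _
      have hMbpos : (0:ℝ) ≤ 2*(r:ℝ)/(1+2*L) := by positivity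
      have hMpow : ((2*(r:ℝ))/(1+2*L))^r ≤ M^r := pow_le_pow_left₀ hMbpos hMb r
      calc ((u:ℝ)^r / u.factorial) * (γ^(2*u) * ψ^(r - 2*u))
          ≤ ((u:ℝ)^r / u.factorial) * (T^r * Real.exp (-(2*L*u))) := by
            apply mul_le_mul_of_nonneg_left (C1 u h2ur) (by positivity)
        _ = ((u:ℝ)^r * Real.exp (-(2*L*u)) / u.factorial) * T^r := by ring
        _ ≤ (((2*(r:ℝ))/(1+2*L))^r / p) * T^r := by
            apply mul_le_mul_of_nonneg_right _ (by positivity)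
            rw [div_le_iff₀ hfacpos]
            calc (u:ℝ)^r * Real.exp (-(2*L*u)) ≤ (u.factorial : ℝ) * ((2*(r:ℝ)/(1+2*L))^r / p) := by
                  exact hk
              _ = (2*(r:ℝ)/(1+2*L))^r / p * u.factorial := by ring
        _ ≤ (M^r / p) * T^r := by
            gcongr
        _ = (M*T)^r / p := by rw [mul_pow]; ring
    calc ∑ u ∈ Finset.Icc 1 p, ((u:ℝ)^r / u.factorial) * (γ^(2*u) * ψ^(r - 2*u))
        ≤ ∑ _u ∈ Finset.Icc 1 p, (M*T)^r / p := Finset.sum_le_sum hterm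
      _ = p * ((M*T)^r / p) := by rw [Finset.sum_const, hcard, nsmul_eq_mul]
      _ = (M*T)^r := by
          have hppos : (0:ℝ) < p := by exact_mod_cast hp1
          field_simp
  have hint0 : 0 ≤ ∫ ω, ‖∑ i, a i * X i ω‖ ^ r ∂μ :=
    integral_nonneg fun ω => by positivity
  exact hrpow _ hint0 (le_trans KEY hfinal)
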